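/- arXiv:2203.02827 — 2 statements merged into one kernel-verified Lean document; each statement's English description precedes it below -/
import Mathlib

section
/- A square real matrix A is Schur stable (all eigenvalues have modulus strictly less than 1) if and only if there exists a symmetric positive definite matrix W such that the block matrix [[W, A·W],[W·Aᵀ, W]] is positive definite. -/
open Matrix


section SchurAux

open Complex Filter
open scoped ComplexOrder Topology ENNReal NNReal

variable {n : ℕ}

lemma block_quad (A W : Matrix (Fin n) (Fin n) ℝ) (x₁ x₂ : Fin n → ℝ) :
    (Sum.elim x₁ x₂) ⬝ᵥ (fromBlocks W (A*W) (W*Aᵀ) W) *ᵥ (Sum.elim x₁ x₂)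
      = (Aᵀ *ᵥ x₁ + x₂) ⬝ᵥ W *ᵥ (Aᵀ *ᵥ x₁ + x₂) + x₁ ⬝ᵥ (W - A*W*Aᵀ) *ᵥ x₁ := by
  simp only [fromBlocks_mulVec, Sum.elim_comp_inl, Sum.elim_comp_inr,
    sumElim_dotProduct_sumElim, mulVec_add, dotProduct_add, add_dotProduct,
    sub_mulVec, dotProduct_sub, ← mulVec_mulVec, dotProduct_mulVec, vecMul_transpose,
    mulVec_transpose, add_vecMul]
  ring

lemma blockPosDef {A W : Matrix (Fin n) (Fin n) ℝ} (hW : W.PosDef) (hWs : Wᵀ = W)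
    (hS : (W - A*W*Aᵀ).PosDef) : (fromBlocks W (A*W) (W*Aᵀ) W).PosDef := by
  refine posDef_iff_dotProduct_mulVec.mpr ⟨?_, ?_⟩
  · show _ = _
    rw [fromBlocks_conjTranspose]
    simp only [conjTranspose_eq_transpose_of_trivial, transpose_mul, transpose_transpose, hWs]
  · intro z hz
    have hz' : z = Sum.elim (z ∘ Sum.inl) (z ∘ Sum.inr) := (Sum.elim_comp_inl_inr z).symm
    rw [star_trivial, hz', block_quad]
    rcases eq_or_ne (z ∘ Sum.inl) 0 with h1 | h1
    · have h2 : z ∘ Sum.inr ≠ 0 := by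
        intro h2
        apply hz
        rw [hz', h1, h2]; simp
      have := hW.dotProduct_mulVec_pos h2
      rw [star_trivial] at this
      simp only [h1, mulVec_zero, zero_add, dotProduct_zero, add_zero, zero_dotProduct]
      simpa using this
    · have h3 := hS.dotProduct_mulVec_pos h1
      rw [star_trivial] at h3
      have h4 := hW.posSemidef.dotProduct_mulVec_nonneg (Aᵀ *ᵥ (z ∘ Sum.inl) + z ∘ Sum.inr)
      rw [star_trivial] at h4
      linarith

lemma quad_map_real (P : Matrix (Fin n) (Fin n) ℝ) (a b : Fin n → ℝ) :
    ((algebraMap ℝ ℂ) ∘ a) ⬝ᵥ (P.map (algebraMap ℝ ℂ)) *ᵥ ((algebraMap ℝ ℂ) ∘ b)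
      = ((a ⬝ᵥ P *ᵥ b : ℝ) : ℂ) := by
  have h1 : (P.map (algebraMap ℝ ℂ)) *ᵥ ((algebraMap ℝ ℂ) ∘ b)
      = (algebraMap ℝ ℂ) ∘ (P *ᵥ b) := by
    funext i
    exact (RingHom.map_mulVec (algebraMap ℝ ℂ) P b i).symm
  rw [h1, ← RingHom.map_dotProduct]
  rfl

lemma conjTranspose_map_real (P : Matrix (Fin n) (Fin n) ℝ) :
    (P.map (algebraMap ℝ ℂ))ᴴ = Pᵀ.map (algebraMap ℝ ℂ) := by
  ext i j
  simp [conjTranspose_apply, Complex.conj_ofReal]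

lemma posDef_map_complex {P : Matrix (Fin n) (Fin n) ℝ} (hP : P.PosDef) :
    (P.map (algebraMap ℝ ℂ)).PosDef := by
  have hsymm : Pᵀ = P := hP.1
  refine posDef_iff_dotProduct_mulVec.mpr ⟨?_, ?_⟩
  · show _ = _
    rw [conjTranspose_map_real, hsymm]
  · intro x hx
    set a : Fin n → ℝ := fun i => (x i).re with ha
    set b : Fin n → ℝ := fun i => (x i).im with hb
    have hx' : x = (algebraMap ℝ ℂ) ∘ a + Complex.I • ((algebraMap ℝ ℂ) ∘ b) := by
      funext i
      simp [ha, hb, Function.comp]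
      rw [mul_comm]
      exact (Complex.re_add_im (x i)).symm
    have hsym : ∀ u v : Fin n → ℝ, u ⬝ᵥ P *ᵥ v = v ⬝ᵥ P *ᵥ u := by
      intro u v
      rw [dotProduct_mulVec, ← mulVec_transpose, hsymm, dotProduct_comm]
    have key : star x ⬝ᵥ (P.map (algebraMap ℝ ℂ)) *ᵥ x
        = ((a ⬝ᵥ P *ᵥ a + b ⬝ᵥ P *ᵥ b : ℝ) : ℂ) := by
      have hsa : star ((algebraMap ℝ ℂ) ∘ a) = (algebraMap ℝ ℂ) ∘ a := by
        funext i; simp [Complex.conj_ofReal]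
      have hsb : star ((algebraMap ℝ ℂ) ∘ b) = (algebraMap ℝ ℂ) ∘ b := by
        funext i; simp [Complex.conj_ofReal]
      rw [hx', star_add, star_smul, hsa, hsb]
      simp only [mulVec_add, mulVec_smul, dotProduct_add, add_dotProduct,
        smul_dotProduct, dotProduct_smul, quad_map_real, hsym b a, smul_eq_mul,
        RCLike.star_def, Complex.conj_I]
      push_cast
      linear_combination (-(↑(b ⬝ᵥ P *ᵥ b) : ℂ)) * Complex.I_sq
    rw [key]
    have hab : a ≠ 0 ∨ b ≠ 0 := by
      by_contra h
      push_neg at h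
      apply hx
      funext i
      have h1 : a i = 0 := by rw [h.1]; rfl
      have h2 : b i = 0 := by rw [h.2]; rfl
      exact Complex.ext h1 h2
    have hnn : ∀ u : Fin n → ℝ, 0 ≤ u ⬝ᵥ P *ᵥ u := by
      intro u
      simpa using hP.posSemidef.dotProduct_mulVec_nonneg u
    have hpos : 0 < a ⬝ᵥ P *ᵥ a + b ⬝ᵥ P *ᵥ b := by
      rcases hab with h | h
      · have := hP.dotProduct_mulVec_pos h; rw [star_trivial] at this; have := hnn b; linarith
      · have := hP.dotProduct_mulVec_pos h; rw [star_trivial] at this; have := hnn a; linarith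
    exact_mod_cast Complex.zero_lt_real.mpr hpos

lemma backward_spec {A W : Matrix (Fin n) (Fin n) ℝ} (hW : W.PosDef)
    (hS : (W - A*W*Aᵀ).PosDef) :
    ∀ μ ∈ spectrum ℂ (A.map (algebraMap ℝ ℂ)), ‖μ‖ < 1 := by
  intro μ hμ
  set Ac := A.map (algebraMap ℝ ℂ) with hAc
  rw [spectrum.mem_iff] at hμ
  have hdet : (algebraMap ℂ (Matrix (Fin n) (Fin n) ℂ) μ - Ac).det = 0 := by
    by_contra h
    exact hμ ((isUnit_iff_isUnit_det _).mpr (Ne.isUnit h))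
  have hdetT : ((algebraMap ℂ (Matrix (Fin n) (Fin n) ℂ) μ - Ac)ᵀ).det = 0 := by
    rwa [det_transpose]
  obtain ⟨v, hv, hv0⟩ := (Matrix.exists_mulVec_eq_zero_iff).mpr hdetT
  have heig : Acᵀ *ᵥ v = μ • v := by
    have h1 : (algebraMap ℂ (Matrix (Fin n) (Fin n) ℂ) μ - Ac)ᵀ *ᵥ v
        = μ • v - Acᵀ *ᵥ v := by
      rw [transpose_sub, sub_mulVec]
      congr 1
      rw [Algebra.algebraMap_eq_smul_one, transpose_smul, transpose_one,
        smul_mulVec, one_mulVec]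
    rw [h1] at hv0
    exact (sub_eq_zero.mp hv0).symm
  have hWc := posDef_map_complex hW
  have hSc := posDef_map_complex hS
  set Wc := W.map (algebraMap ℝ ℂ) with hWc'
  have hmap : (W - A*W*Aᵀ).map (algebraMap ℝ ℂ) = Wc - Ac * Wc * Acᵀ := by
    have h2 := map_sub (RingHom.mapMatrix (algebraMap ℝ ℂ)) W (A*W*Aᵀ)
    have h3 := map_mul (RingHom.mapMatrix (algebraMap ℝ ℂ)) (A*W) Aᵀ
    have h4 := map_mul (RingHom.mapMatrix (algebraMap ℝ ℂ)) A W
    simp only [RingHom.mapMatrix_apply] at h2 h3 h4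
    rw [h2, h3, h4, transpose_map]
  rw [hmap] at hSc
  have hq := hWc.dotProduct_mulVec_pos hv
  have hqS := hSc.dotProduct_mulVec_pos hv
  set q := star v ⬝ᵥ Wc *ᵥ v with hq'
  have hcomp : star v ⬝ᵥ (Ac * Wc * Acᵀ) *ᵥ v = ((‖μ‖^2 : ℝ) : ℂ) * q := by
    have e1 : (Ac * Wc * Acᵀ) *ᵥ v = Ac *ᵥ (Wc *ᵥ (Acᵀ *ᵥ v)) := by
      simp [mulVec_mulVec, mul_assoc]
    have e2 : star v ᵥ* Ac = star (Acᴴ *ᵥ v) := by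
      rw [star_mulVec, conjTranspose_conjTranspose]
    have e3 : Acᴴ = Acᵀ := by
      rw [hAc, conjTranspose_map_real, transpose_map]
    rw [e1, heig, dotProduct_mulVec, e2, e3, heig, star_smul, smul_dotProduct,
      mulVec_smul, dotProduct_smul]
    rw [smul_eq_mul, smul_eq_mul, ← mul_assoc]
    congr 1
    rw [RCLike.star_def, mul_comm, Complex.mul_conj]
    norm_cast
    rw [Complex.normSq_eq_norm_sq]
  rw [sub_mulVec, dotProduct_sub, hcomp, ← hq'] at hqS
  rw [Complex.lt_def] at hq hqS
  obtain ⟨hqre, hqim⟩ := hq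
  obtain ⟨hSre, _⟩ := hqS
  simp only [Complex.zero_re, Complex.sub_re, Complex.mul_re, Complex.ofReal_re,
    Complex.ofReal_im, Complex.zero_im] at hqre hSre hqim
  have hqre' : 0 < q.re := hqre
  have : 0 < q.re - ‖μ‖^2 * q.re := by
    have : (0:ℝ) * q.im = 0 := by ring
    nlinarith [hSre]
  nlinarith [norm_nonneg μ, hqre', sq_nonneg (‖μ‖ - 1)]

attribute [local instance] Matrix.frobeniusSeminormedAddCommGroup
  Matrix.frobeniusNormedAddCommGroup Matrix.frobeniusNormedSpace
  Matrix.frobeniusIsBoundedSMul Matrix.frobeniusNormedRing Matrix.frobeniusNormedAlgebra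

lemma forward_exists (hn : 0 < n) (A : Matrix (Fin n) (Fin n) ℝ)
    (h : ∀ μ ∈ spectrum ℂ (A.map (algebraMap ℝ ℂ)), ‖μ‖ < 1) :
    ∃ W : Matrix (Fin n) (Fin n) ℝ, W.PosDef ∧ Wᵀ = W ∧ (W - A*W*Aᵀ).PosDef := by
  haveI : Nonempty (Fin n) := Fin.pos_iff_nonempty.mp hn
  haveI : CompleteSpace (Matrix (Fin n) (Fin n) ℝ) := FiniteDimensional.complete ℝ _
  set Ac := A.map (algebraMap ℝ ℂ) with hAc
  have hρ : spectralRadius ℂ Ac < 1 := by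
    have h1 := spectrum.spectralRadius_lt_of_forall_lt (a := Ac) (r := 1)
      (fun z hz => by exact_mod_cast h z hz)
    simpa using h1
  obtain ⟨t, ht1, ht2⟩ := exists_between hρ
  have htne : t ≠ ⊤ := (ht2.trans ENNReal.one_lt_top).ne
  lift t to ℝ≥0 using htne
  have htlt : (t : ℝ) < 1 := by exact_mod_cast ENNReal.coe_lt_one_iff.mp ht2
  have ht0 : (0:ℝ) ≤ t := t.coe_nonneg
  have hnorm : ∀ k : ℕ, ‖Ac ^ k‖₊ = ‖A ^ k‖₊ := by
    intro k
    have h2 : Ac ^ k = (A ^ k).map (algebraMap ℝ ℂ) := by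
      rw [hAc, ← RingHom.mapMatrix_apply, ← RingHom.mapMatrix_apply, map_pow]
    rw [h2]
    exact Matrix.frobenius_nnnorm_map_eq _ _ (fun a => by simp)
  have hgel := spectrum.pow_nnnorm_pow_one_div_tendsto_nhds_spectralRadius Ac
  have hev : ∀ᶠ (k : ℕ) in atTop, (‖Ac ^ k‖₊ : ℝ≥0∞) ^ (1/(k:ℝ)) < (t : ℝ≥0∞) :=
    hgel.eventually_lt_const ht1
  have hbd : ∀ᶠ (k : ℕ) in atTop, ‖A ^ k‖ ≤ (t : ℝ) ^ k := by
    filter_upwards [hev, eventually_ge_atTop 1] with k hk hk1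
    have hk0 : (k:ℝ) ≠ 0 := by positivity
    have h3 : ((‖Ac ^ k‖₊ : ℝ≥0∞) ^ (1/(k:ℝ))) ^ (k:ℝ) < (t : ℝ≥0∞) ^ (k:ℝ) := by
      apply ENNReal.rpow_lt_rpow hk (by positivity)
    rw [← ENNReal.rpow_mul, one_div, inv_mul_cancel₀ hk0, ENNReal.rpow_one] at h3
    rw [ENNReal.rpow_natCast, ← ENNReal.coe_pow, ENNReal.coe_lt_coe, hnorm] at h3
    have := h3.le
    rw [← NNReal.coe_le_coe] at this
    simpa using this
  -- the series
  set f : ℕ → Matrix (Fin n) (Fin n) ℝ := fun k => A ^ k * (Aᵀ) ^ k with hf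
  have hfnorm : ∀ᶠ (k : ℕ) in atTop, ‖f k‖ ≤ ((t:ℝ)^2)^k := by
    filter_upwards [hbd] with k hk
    have h4 : ‖f k‖ ≤ ‖A ^ k‖ * ‖(Aᵀ) ^ k‖ := norm_mul_le _ _
    have h5 : (Aᵀ) ^ k = (A ^ k)ᵀ := (transpose_pow A k).symm
    rw [h5, Matrix.frobenius_norm_transpose] at h4
    calc ‖f k‖ ≤ ‖A ^ k‖ * ‖A ^ k‖ := h4
      _ ≤ (t:ℝ)^k * (t:ℝ)^k := by
          apply mul_le_mul hk hk (norm_nonneg _) (by positivity)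
      _ = ((t:ℝ)^2)^k := by ring
  have hsum : Summable f := by
    apply Summable.of_norm_bounded_eventually_nat ?_ hfnorm
    exact summable_geometric_of_lt_one (by positivity) (by nlinarith)
  set W := ∑' k, f k with hWdef
  have hWsum : HasSum f W := hsum.hasSum
  -- transpose of each term
  have hft : ∀ k, (f k)ᵀ = f k := by
    intro k
    rw [hf]
    simp only [transpose_mul, transpose_pow, transpose_transpose]
  -- W is symmetric
  let T : Matrix (Fin n) (Fin n) ℝ →ₗ[ℝ] Matrix (Fin n) (Fin n) ℝ :=
    { toFun := fun M => Mᵀ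
      map_add' := fun M N => transpose_add M N
      map_smul' := fun c M => transpose_smul c M }
  have hWt : Wᵀ = W := by
    have h6 : HasSum (fun k => (LinearMap.toContinuousLinearMap T) (f k))
        ((LinearMap.toContinuousLinearMap T) W) := hWsum.mapL _
    simp only [LinearMap.coe_toContinuousLinearMap'] at h6
    simp only [T, LinearMap.coe_mk, AddHom.coe_mk] at h6
    simp only [hft] at h6
    exact h6.unique hWsum
  -- A * W * Aᵀ = W - 1
  let Ψ : Matrix (Fin n) (Fin n) ℝ →ₗ[ℝ] Matrix (Fin n) (Fin n) ℝ :=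
    { toFun := fun M => A * M * Aᵀ
      map_add' := fun M N => by
        show A * (M + N) * Aᵀ = A * M * Aᵀ + A * N * Aᵀ
        noncomm_ring
      map_smul' := fun c M => by
        simp only [RingHom.id_apply, Matrix.mul_smul, Matrix.smul_mul] }
  have hfs : ∀ k, A * f k * Aᵀ = f (k+1) := by
    intro k
    show A * (A ^ k * Aᵀ ^ k) * Aᵀ = A ^ (k+1) * Aᵀ ^ (k+1)
    rw [pow_succ', pow_succ]
    noncomm_ring
  have hAWA : A * W * Aᵀ = W - 1 := by
    have h8 : HasSum (fun k => (LinearMap.toContinuousLinearMap Ψ) (f k))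
        ((LinearMap.toContinuousLinearMap Ψ) W) := hWsum.mapL _
    simp only [LinearMap.coe_toContinuousLinearMap'] at h8
    simp only [Ψ, LinearMap.coe_mk, AddHom.coe_mk] at h8
    simp only [hfs] at h8
    have h9 : HasSum (fun k => f (k+1)) (A * W * Aᵀ) := h8
    have h10 : HasSum (fun k => f (k+1)) (W - 1) := by
      rw [hasSum_nat_add_iff 1]
      have hf0 : f 0 = 1 := by simp [hf]
      simpa [hf0] using hWsum
    exact h9.unique h10
  have hf0' : f 0 = 1 := by simp [hf]
  -- positivity of W
  have hWpos : W.PosDef := by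
    refine posDef_iff_dotProduct_mulVec.mpr ⟨?_, ?_⟩
    · show _ = _
      rw [conjTranspose_eq_transpose_of_trivial, hWt]
    · intro x hx
      rw [star_trivial]
      let Φ : Matrix (Fin n) (Fin n) ℝ →ₗ[ℝ] ℝ :=
        { toFun := fun M => x ⬝ᵥ M *ᵥ x
          map_add' := fun M N => by
            show x ⬝ᵥ (M + N) *ᵥ x = x ⬝ᵥ M *ᵥ x + x ⬝ᵥ N *ᵥ x
            rw [add_mulVec, dotProduct_add]
          map_smul' := fun c M => by
            show x ⬝ᵥ (c • M) *ᵥ x = (RingHom.id ℝ) c • (x ⬝ᵥ M *ᵥ x)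
            rw [smul_mulVec, dotProduct_smul, RingHom.id_apply] }
      have h11 : HasSum (fun k => (LinearMap.toContinuousLinearMap Φ) (f k))
          ((LinearMap.toContinuousLinearMap Φ) W) := hWsum.mapL _
      simp only [LinearMap.coe_toContinuousLinearMap'] at h11
      have h12 : ∀ k, Φ (f k) = ((Aᵀ) ^ k *ᵥ x) ⬝ᵥ ((Aᵀ) ^ k *ᵥ x) := by
        intro k
        show x ⬝ᵥ (A ^ k * (Aᵀ) ^ k) *ᵥ x = _
        rw [← mulVec_mulVec, dotProduct_mulVec, ← mulVec_transpose, transpose_pow]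
      have h13 : Φ (f 0) ≤ Φ W := by
        apply le_hasSum h11 0
        intro j _
        rw [h12 j]
        exact Finset.sum_nonneg fun i _ => mul_self_nonneg _
      have h14 : (0:ℝ) < Φ (f 0) := by
        show (0:ℝ) < x ⬝ᵥ (f 0) *ᵥ x
        rw [hf0', one_mulVec]
        exact Finset.sum_pos' (fun i _ => mul_self_nonneg _) (by
          obtain ⟨i, hi⟩ := Function.ne_iff.mp hx
          exact ⟨i, Finset.mem_univ i, by simpa using mul_self_pos.mpr hi⟩)
      show (0:ℝ) < x ⬝ᵥ W *ᵥ x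
      calc (0:ℝ) < Φ (f 0) := h14
        _ ≤ Φ W := h13
  have hSpos : (W - A * W * Aᵀ).PosDef := by
    rw [hAWA, sub_sub_cancel]
    exact Matrix.PosDef.one
  exact ⟨W, hWpos, hWt, hSpos⟩

lemma posDef_of_subsingleton (M : Matrix (Fin 0) (Fin 0) ℝ) : M.PosDef :=
  ⟨Subsingleton.elim _ _, fun x hx => absurd (Subsingleton.elim x 0) hx⟩

end SchurAux

/-- A real square matrix is Schur stable iff there is a symmetric positive
definite W such that the block matrix [[W, AW],[WAᵀ, W]] is positive definite. -/
theorem stmt_3 {n : ℕ} (A : Matrix (Fin n) (Fin n) ℝ) :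
    (∀ μ ∈ spectrum ℂ (A.map (algebraMap ℝ ℂ)), ‖μ‖ < 1) ↔
      ∃ W : Matrix (Fin n) (Fin n) ℝ, W.PosDef ∧ Wᵀ = W ∧
        (Matrix.fromBlocks W (A * W) (W * Aᵀ) W).PosDef := by
  constructor
  · intro h
    rcases Nat.eq_zero_or_pos n with hn | hn
    · subst hn
      exact ⟨1, posDef_of_subsingleton 1, by simp,
        ⟨Subsingleton.elim _ _, fun x hx => absurd (Subsingleton.elim x 0) hx⟩⟩
    · obtain ⟨W, hW, hWs, hS⟩ := forward_exists hn A h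
      exact ⟨W, hW, hWs, blockPosDef hW hWs hS⟩
  · rintro ⟨W, hW, hWs, hblock⟩
    have hS : (W - A*W*Aᵀ).PosDef := by
      refine posDef_iff_dotProduct_mulVec.mpr ⟨?_, ?_⟩
      · show _ = _
        rw [conjTranspose_eq_transpose_of_trivial, transpose_sub, transpose_mul,
          transpose_mul, transpose_transpose, hWs, Matrix.mul_assoc]
      · intro x hx
        rw [star_trivial]
        set z : Fin n ⊕ Fin n → ℝ := Sum.elim x (-(Aᵀ *ᵥ x)) with hz
        have hzne : z ≠ 0 := by
          intro h0
          apply hx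
          funext i
          exact congrFun h0 (Sum.inl i)
        have := hblock.dotProduct_mulVec_pos hzne
        rw [star_trivial, hz, block_quad] at this
        simpa [Matrix.mul_assoc] using this
    exact backward_spec hW hS
end

section
/- Let N₁ ∈ ℝ^(n×n), N₂ ∈ ℝ^(n×p), N₃ ∈ ℝ^(q×n), and let T ∈ ℝ^(r×q) be such that T·N₃ has full row rank r. Suppose there exist W ∈ ℝ^(n×n) symmetric positive definite, N ∈ ℝ^(p×r), and M ∈ ℝ^(r×r) such that T·N₃·W = M·T·N₃ and the block matrix [[W, N₁W + N₂·N·T·N₃],[(N₁W + N₂·N·T·N₃)ᵀ, W]] is positive definite. Then M is invertible, and the matrix A := N₁ + N₂·(N·M⁻¹·T)·N₃ satisfies: [[W, AW],[WAᵀ, W]] is positive definite (hence A is Schur stable). -/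
open Matrix

lemma isUnit_of_rank_eq_card {r : ℕ} (M : Matrix (Fin r) (Fin r) ℝ)
    (h : M.rank = r) : IsUnit M := by
  rw [← Matrix.mulVec_surjective_iff_isUnit]
  have htop : LinearMap.range M.mulVecLin = ⊤ := by
    apply Submodule.eq_top_of_finrank_eq
    simpa [Matrix.rank] using h
  intro y
  have := LinearMap.range_eq_top.mp htop y
  simpa using this

/-- LMI tightening of the BMI in the op-UIE design: the LMI conditions force
M invertible and A := N₁ + N₂(N M⁻¹ T)N₃ to satisfy the Lyapunov LMI. -/
theorem stmt_7 {n p q r : ℕ}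
    (N₁ : Matrix (Fin n) (Fin n) ℝ) (N₂ : Matrix (Fin n) (Fin p) ℝ)
    (N₃ : Matrix (Fin q) (Fin n) ℝ) (T : Matrix (Fin r) (Fin q) ℝ)
    (hrank : (T * N₃).rank = r)
    (W : Matrix (Fin n) (Fin n) ℝ) (hWsymm : Wᵀ = W) (hW : W.PosDef)
    (N : Matrix (Fin p) (Fin r) ℝ) (M : Matrix (Fin r) (Fin r) ℝ)
    (hM : T * N₃ * W = M * (T * N₃))
    (hLMI : (Matrix.fromBlocks W (N₁ * W + N₂ * N * T * N₃)
        (N₁ * W + N₂ * N * T * N₃)ᵀ W).PosDef) :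
    IsUnit M ∧
      (Matrix.fromBlocks W ((N₁ + N₂ * (N * M⁻¹ * T) * N₃) * W)
        (W * (N₁ + N₂ * (N * M⁻¹ * T) * N₃)ᵀ) W).PosDef := by
  have hWdet : IsUnit W.det := isUnit_iff_ne_zero.mpr hW.det_pos.ne'
  have hrk2 : (M * (T * N₃)).rank = r := by
    rw [← hM, Matrix.rank_mul_eq_left_of_isUnit_det W _ hWdet, hrank]
  have hMrank : M.rank = r :=
    le_antisymm (by simpa using Matrix.rank_le_card_width M)
      (hrk2.symm.trans_le (Matrix.rank_mul_le_left M (T * N₃)))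
  have hMunit : IsUnit M := isUnit_of_rank_eq_card M hMrank
  have key : M⁻¹ * (T * (N₃ * W)) = T * N₃ := by
    have h1 : T * (N₃ * W) = M * (T * N₃) := by
      rw [← Matrix.mul_assoc]; exact hM
    rw [h1, ← Matrix.mul_assoc,
      Matrix.nonsing_inv_mul M ((Matrix.isUnit_iff_isUnit_det M).mp hMunit), Matrix.one_mul]
  have hEq : (N₁ + N₂ * (N * M⁻¹ * T) * N₃) * W = N₁ * W + N₂ * N * T * N₃ := by
    simp only [Matrix.add_mul, Matrix.mul_assoc, key]
  have hlow : W * (N₁ + N₂ * (N * M⁻¹ * T) * N₃)ᵀ = (N₁ * W + N₂ * N * T * N₃)ᵀ := by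
    rw [← hEq, Matrix.transpose_mul, hWsymm]
  rw [hEq, hlow]
  exact ⟨hMunit, hLMI⟩
end
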